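/- Under the setup, the set F := {p ∈ ℝ² : p·q ≤ γ°(q) for every q ∈ ℝ² with |q| = 1} equals the set {p ∈ ℝ² : n_j·p ≤ 1 for all j = 0,…,N−1}; that is, the region bounded by the support function γ° is exactly the polygon determined by the constructed vectors n_j. -/

import Mathlib

open Real

/-- Euclidean inner product on `ℝ × ℝ`. -/
def dot (p q : ℝ × ℝ) : ℝ := p.1 * q.1 + p.2 * q.2

/-- Reconstruction of the crystalline energy density from the support function:
under the assumptions (γ1)–(γ3) on the data `m_j = η_j (cos ψ_j, sin ψ_j)` of
`γ°(p) = max_j m_j · p`, the Frank set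
`F = {p : p · q ≤ γ°(q) for every unit vector q}` is exactly the polygon
`{p : n_j · p ≤ 1 for all j}` determined by the constructed vectors
`n_j = r_j (cos θ_j, sin θ_j)`. -/
theorem frank_set_eq_polygon
    (N : ℕ) (hN : 3 ≤ N)
    (η ψ : ℤ → ℝ)
    (hηpos : ∀ j, 0 < η j)
    (hηper : ∀ j, η (j + N) = η j)
    (hψper : ∀ j, ψ (j + N) = ψ j + 2 * π)
    (hψmono : ∀ j, ψ j < ψ (j + 1))
    (hψgap : ∀ j, ψ (j + 1) < ψ j + π)
    (m : ℤ → ℝ × ℝ)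
    (hm : ∀ j, m j = (η j * cos (ψ j), η j * sin (ψ j)))
    (γpol : ℝ × ℝ → ℝ)
    (hγpol : ∀ p, γpol p = (Finset.range N).sup'
      (Finset.nonempty_range_iff.mpr (by omega)) (fun j => dot (m (j : ℤ)) p))
    -- (γ3): each maximality region is cut out by the two neighbouring
    -- constraints, and is nonempty (contains a point of strict maximality).
    (hγ3a : ∀ j : ℤ,
      {p : ℝ × ℝ | ∀ k ∈ Finset.range N, dot (m (k : ℤ)) p ≤ dot (m j) p}
        = {p : ℝ × ℝ | dot (m (j - 1)) p ≤ dot (m j) p ∧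
            dot (m (j + 1)) p ≤ dot (m j) p})
    (hγ3b : ∀ j : ℤ, ∃ p : ℝ × ℝ,
      ∀ k ∈ Finset.range N, (k : ℤ) % N ≠ j % N → dot (m (k : ℤ)) p < dot (m j) p)
    (a b c θ r : ℤ → ℝ) (n : ℤ → ℝ × ℝ)
    (ha : ∀ j, a j = η j * cos (ψ j) - η (j - 1) * cos (ψ (j - 1)))
    (hb : ∀ j, b j = η j * sin (ψ j) - η (j - 1) * sin (ψ (j - 1)))
    (hc : ∀ j, cos (c j) = a j / Real.sqrt (a j ^ 2 + b j ^ 2) ∧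
      sin (c j) = b j / Real.sqrt (a j ^ 2 + b j ^ 2))
    (hθ : ∀ j, θ j = c j + π / 2)
    (hr : ∀ j, r j = (η j * cos (θ j - ψ j))⁻¹)
    (hn : ∀ j, n j = (r j * cos (θ j), r j * sin (θ j))) :
    {p : ℝ × ℝ | ∀ q : ℝ × ℝ, q.1 ^ 2 + q.2 ^ 2 = 1 → dot p q ≤ γpol q}
      = {p : ℝ × ℝ | ∀ j ∈ Finset.range N, dot (n (j : ℤ)) p ≤ 1} := by
  have hπ : (0:ℝ) < π := Real.pi_pos
  -- nondegeneracy of the edge vectors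
  have hab : ∀ j, 0 < a j ^ 2 + b j ^ 2 := by
    intro j
    rcases lt_or_ge 0 (a j ^ 2 + b j ^ 2) with h | h
    · exact h
    · exfalso
      have h0 : a j ^ 2 + b j ^ 2 = 0 := le_antisymm h (by positivity)
      have hs0 : Real.sqrt (a j ^ 2 + b j ^ 2) = 0 := by rw [h0, Real.sqrt_zero]
      have h1 := (hc j).1
      have h2 := (hc j).2
      rw [hs0, div_zero] at h1 h2
      have := sin_sq_add_cos_sq (c j)
      rw [h1, h2] at this
      norm_num at this
  have hRpos : ∀ j, 0 < Real.sqrt (a j ^ 2 + b j ^ 2) := fun j =>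
    Real.sqrt_pos.mpr (hab j)
  have haR : ∀ j, a j = Real.sqrt (a j ^ 2 + b j ^ 2) * cos (c j) := by
    intro j
    rw [(hc j).1, mul_comm, div_mul_cancel₀ _ (ne_of_gt (hRpos j))]
  have hbR : ∀ j, b j = Real.sqrt (a j ^ 2 + b j ^ 2) * sin (c j) := by
    intro j
    rw [(hc j).2, mul_comm, div_mul_cancel₀ _ (ne_of_gt (hRpos j))]
  have hcosθ : ∀ j, cos (θ j) = -sin (c j) := by
    intro j; rw [hθ, cos_add_pi_div_two]
  have hsinθ : ∀ j, sin (θ j) = cos (c j) := by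
    intro j; rw [hθ, sin_add_pi_div_two]
  -- key sign computation
  have hkey : ∀ j, a j * sin (ψ j) - b j * cos (ψ j)
      = -(η (j-1) * sin (ψ j - ψ (j-1))) := by
    intro j; rw [ha, hb, sin_sub]; ring
  have hsinΔ : ∀ j : ℤ, 0 < sin (ψ j - ψ (j-1)) := by
    intro j
    have h1 := hψmono (j-1)
    have h2 := hψgap (j-1)
    rw [sub_add_cancel] at h1 h2
    exact Real.sin_pos_of_pos_of_lt_pi (by linarith) (by linarith)
  have hEexpr : ∀ j, η j * cos (θ j - ψ j)
      = η j * (-(η (j-1) * sin (ψ j - ψ (j-1)))) / Real.sqrt (a j ^ 2 + b j ^ 2) := by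
    intro j
    rw [cos_sub, hcosθ, hsinθ, (hc j).1, (hc j).2]
    rw [← hkey j]
    field_simp
    ring
  have hEneg : ∀ j, η j * cos (θ j - ψ j) < 0 := by
    intro j
    rw [hEexpr j]
    apply div_neg_of_neg_of_pos _ (hRpos j)
    nlinarith [mul_pos (mul_pos (hηpos j) (hηpos (j-1))) (hsinΔ j)]
  have hrneg : ∀ j, r j < 0 := by
    intro j; rw [hr]; exact inv_lt_zero.mpr (hEneg j)
  have hrE : ∀ j, r j * (η j * cos (θ j - ψ j)) = 1 := by
    intro j; rw [hr]; exact inv_mul_cancel₀ (ne_of_lt (hEneg j))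
  -- the two basic incidences
  have hmn : ∀ j, dot (m j) (n j) = 1 := by
    intro j
    have h0 : dot (m j) (n j) = r j * (η j * cos (θ j - ψ j)) := by
      simp only [dot, hm, hn, cos_sub]
      ring
    rw [h0, hrE]
  have hmn' : ∀ j, dot (m (j-1)) (n j) = 1 := by
    intro j
    have h0 : dot (m j) (n j) - dot (m (j-1)) (n j)
        = r j * (a j * cos (θ j) + b j * sin (θ j)) := by
      simp only [dot, hm, hn, ha, hb]
      ring
    have h1 : a j * cos (θ j) + b j * sin (θ j) = 0 := by
      rw [hcosθ, hsinθ]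
      linear_combination (-(Real.sin (c j))) * haR j + Real.cos (c j) * hbR j
    have := hmn j
    rw [h1, mul_zero] at h0
    linarith
  -- periodicity
  have hNpos : (0:ℤ) < (N:ℤ) := by exact_mod_cast Nat.lt_of_lt_of_le (by norm_num) hN
  have haper : ∀ j, a (j + N) = a j := by
    intro j
    have e1 : j + (N:ℤ) - 1 = (j - 1) + N := by ring
    rw [ha, ha, e1, hηper, hηper, hψper, hψper, Real.cos_add_two_pi, Real.cos_add_two_pi]
  have hbper : ∀ j, b (j + N) = b j := by
    intro j
    have e1 : j + (N:ℤ) - 1 = (j - 1) + N := by ring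
    rw [hb, hb, e1, hηper, hηper, hψper, hψper, Real.sin_add_two_pi, Real.sin_add_two_pi]
  have hccos : ∀ j, cos (c (j + N)) = cos (c j) := by
    intro j; rw [(hc (j+N)).1, (hc j).1, haper, hbper]
  have hcsin : ∀ j, sin (c (j + N)) = sin (c j) := by
    intro j; rw [(hc (j+N)).2, (hc j).2, haper, hbper]
  have hθcos : ∀ j, cos (θ (j + N)) = cos (θ j) := by
    intro j; rw [hcosθ, hcosθ, hcsin]
  have hθsin : ∀ j, sin (θ (j + N)) = sin (θ j) := by
    intro j; rw [hsinθ, hsinθ, hccos]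
  have hrper : ∀ j, r (j + N) = r j := by
    intro j
    rw [hr, hr, cos_sub, cos_sub, hθcos, hθsin, hηper, hψper,
      Real.cos_add_two_pi, Real.sin_add_two_pi]
  have hnper : ∀ j, n (j + N) = n j := by
    intro j
    rw [hn, hn, hrper, hθcos, hθsin]
  have hmper : ∀ j, m (j + N) = m j := by
    intro j
    rw [hm, hm, hηper, hψper, Real.cos_add_two_pi, Real.sin_add_two_pi]
  have hmmul : ∀ (t : ℤ) (j : ℤ), m (j + t * N) = m j := by
    intro t
    induction t using Int.induction_on with
    | zero => intro j; simp
    | succ k ih =>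
        intro j
        have e : j + ((k:ℤ) + 1) * N = (j + k * N) + N := by ring
        rw [e, hmper, ih]
    | pred k ih =>
        intro j
        have e : j + (-(k:ℤ) - 1) * N = (j + (-(k:ℤ)) * N) - N := by ring
        have e2 : (j + (-(k:ℤ)) * N) - N + N = j + (-(k:ℤ)) * N := by ring
        rw [e]
        have := hmper ((j + (-(k:ℤ)) * N) - N)
        rw [e2] at this
        rw [← this, ih]
  have hmmod : ∀ k : ℤ, m (k % N) = m k := by
    intro k
    have e : k = k % N + (k / N) * N := by
      rw [mul_comm]
      exact (Int.emod_add_mul_ediv k N).symm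
    conv_rhs => rw [e]
    rw [hmmul]
  -- ψ is strictly monotone and grows linearly
  have hstrict : StrictMono ψ := strictMono_int_of_lt_succ hψmono
  have hψmul : ∀ (t : ℤ) (j : ℤ), ψ (j + t * N) = ψ j + 2 * π * t := by
    intro t
    induction t using Int.induction_on with
    | zero => intro j; simp
    | succ k ih =>
        intro j
        have e : j + ((k:ℤ) + 1) * N = (j + k * N) + N := by ring
        rw [e, hψper, ih]
        push_cast
        ring
    | pred k ih =>
        intro j
        have e : j + (-(k:ℤ) - 1) * N = (j + (-(k:ℤ)) * N) - N := by ring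
        have e2 : (j + (-(k:ℤ)) * N) - N + N = j + (-(k:ℤ)) * N := by ring
        rw [e]
        have hper := hψper ((j + (-(k:ℤ)) * N) - N)
        rw [e2] at hper
        have : ψ (j + (-(k:ℤ)) * N - N) = ψ (j + (-(k:ℤ)) * N) - 2 * π := by linarith
        rw [this, ih]
        push_cast
        ring
  -- band search: every angle lies between consecutive ψ's
  have hband : ∀ φ : ℝ, ∃ i : ℤ, ψ i ≤ φ ∧ φ < ψ (i + 1) := by
    intro φ
    obtain ⟨k1, hk1⟩ := exists_nat_gt ((ψ 0 - φ) / (2 * π))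
    obtain ⟨k2, hk2⟩ := exists_nat_gt ((φ - ψ 0) / (2 * π))
    have h2π : (0:ℝ) < 2 * π := by linarith
    have hlow : ψ (0 + (-(k1:ℤ)) * N) ≤ φ := by
      rw [hψmul]
      push_cast
      have := (div_lt_iff₀ h2π).mp hk1
      linarith
    have hupp : φ < ψ (0 + (k2:ℤ) * N) := by
      rw [hψmul]
      push_cast
      have := (div_lt_iff₀ h2π).mp hk2
      linarith
    obtain ⟨i, hi, hgr⟩ := Int.exists_greatest_of_bdd
      (P := fun i => ψ i ≤ φ)
      ⟨0 + (k2:ℤ) * N, fun z hz => by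
        by_contra hzz
        push_neg at hzz
        exact absurd (le_trans (hstrict.le_iff_le.mpr hzz.le) hz) (not_le.mpr hupp)⟩
      ⟨0 + (-(k1:ℤ)) * N, hlow⟩
    refine ⟨i, hi, ?_⟩
    by_contra hcon
    push_neg at hcon
    exact absurd (hgr (i + 1) hcon) (by omega)
  -- positivity: in every direction some m k has positive dot product
  have hposdir : ∀ φ : ℝ, ∃ k ∈ Finset.range N,
      0 < dot (m (k : ℤ)) (cos φ, sin φ) := by
    intro φ
    obtain ⟨i, h1, h2⟩ := hband φ
    have hgap := hψgap i
    have hdotval : ∀ l : ℤ, dot (m l) (cos φ, sin φ) = η l * cos (φ - ψ l) := by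
      intro l
      simp only [dot, hm, cos_sub]
      ring
    have hred : ∀ l : ℤ, 0 < dot (m l) (cos φ, sin φ) →
        ∃ k ∈ Finset.range N, 0 < dot (m (k : ℤ)) (cos φ, sin φ) := by
      intro l hl
      refine ⟨(l % N).toNat, ?_, ?_⟩
      · rw [Finset.mem_range]
        have h1 : l % N < N := Int.emod_lt_of_pos l hNpos
        omega
      · have h0 : (0:ℤ) ≤ l % N := Int.emod_nonneg l (ne_of_gt hNpos)
        have e : ((l % N).toNat : ℤ) = l % N := Int.toNat_of_nonneg h0
        rw [e, hmmod]
        exact hl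
    by_cases hh : φ - ψ i < π / 2
    · apply hred i
      rw [hdotval]
      apply mul_pos (hηpos i)
      apply Real.cos_pos_of_mem_Ioo
      constructor
      · linarith
      · exact hh
    · push_neg at hh
      apply hred (i + 1)
      rw [hdotval]
      apply mul_pos (hηpos (i+1))
      have e : φ - ψ (i+1) = -(ψ (i+1) - φ) := by ring
      rw [e, Real.cos_neg]
      apply Real.cos_pos_of_mem_Ioo
      constructor
      · linarith
      · linarith
  -- the crucial orientation inequality
  have hdotu : ∀ l j : ℤ, dot (m l) (cos (θ j), sin (θ j))
      = η l * (cos (ψ l) * cos (θ j) + sin (ψ l) * sin (θ j)) := by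
    intro l j
    simp only [dot, hm]
    ring
  have hedge : ∀ j, dot (m j) (cos (θ j), sin (θ j))
      = dot (m (j-1)) (cos (θ j), sin (θ j)) := by
    intro j
    have h0 : dot (m j) (cos (θ j), sin (θ j)) - dot (m (j-1)) (cos (θ j), sin (θ j))
        = a j * cos (θ j) + b j * sin (θ j) := by
      simp only [dot, hm, ha, hb]
      ring
    have h1 : a j * cos (θ j) + b j * sin (θ j) = 0 := by
      rw [hcosθ, hsinθ]
      linear_combination (-(Real.sin (c j))) * haR j + Real.cos (c j) * hbR j
    linarith
  have hmju : ∀ j, dot (m j) (cos (θ j), sin (θ j)) = η j * cos (θ j - ψ j) := by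
    intro j
    rw [hdotu, cos_sub]
    ring
  have hs : ∀ j, dot (m j) (cos (θ j), sin (θ j))
      < dot (m (j+1)) (cos (θ j), sin (θ j)) := by
    intro j
    by_contra hle
    push_neg at hle
    have hmem := (Set.ext_iff.mp (hγ3a j) (cos (θ j), sin (θ j))).mpr
      ⟨(hedge j).ge, hle⟩
    obtain ⟨k, hk, hkpos⟩ := hposdir (θ j)
    have h1 := hmem k hk
    have h2 : dot (m j) (cos (θ j), sin (θ j)) < 0 := by
      rw [hmju]; exact hEneg j
    linarith
  -- all vertices lie on the correct side of each edge line
  have hscale : ∀ l j : ℤ, dot (m l) (n j) = r j * dot (m l) (cos (θ j), sin (θ j)) := by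
    intro l j
    simp only [dot, hn]
    ring
  have hall : ∀ j : ℤ, ∀ k ∈ Finset.range N, dot (m (k:ℤ)) (n j) ≤ 1 := by
    intro j k hk
    have h2 : dot (m (j+1)) (n j) ≤ dot (m j) (n j) := by
      rw [hscale, hscale]
      have := hs j
      have := hrneg j
      nlinarith
    have h1 : dot (m (j-1)) (n j) ≤ dot (m j) (n j) := by
      rw [hmn, hmn']
    have hmem := (Set.ext_iff.mp (hγ3a j) (n j)).mpr ⟨h1, h2⟩
    have := hmem k hk
    rw [hmn j] at this
    exact this
  -- now the set equality
  apply Set.eq_of_subset_of_subset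
  · -- the Frank set is contained in the polygon
    intro p hp j hj
    simp only [Set.mem_setOf_eq] at hp ⊢
    have hunit : (-cos (θ (j:ℤ)))^2 + (-sin (θ (j:ℤ)))^2 = 1 := by
      rw [neg_pow, neg_pow]
      simp [Real.sin_sq_add_cos_sq, Real.cos_sq_add_sin_sq]
    have hq := hp (-cos (θ (j:ℤ)), -sin (θ (j:ℤ))) hunit
    rw [hγpol] at hq
    have hbound : ∀ k ∈ Finset.range N,
        dot (m (k:ℤ)) (-cos (θ (j:ℤ)), -sin (θ (j:ℤ))) ≤ (-(r (j:ℤ)))⁻¹ := by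
      intro k hk
      have h1 := hall (j:ℤ) k hk
      have hrpos' : 0 < -(r (j:ℤ)) := by linarith [hrneg (j:ℤ)]
      have h2 : dot (m (k:ℤ)) (-cos (θ (j:ℤ)), -sin (θ (j:ℤ))) * (-(r (j:ℤ)))
          = dot (m (k:ℤ)) (n (j:ℤ)) := by
        simp only [dot, hn]
        ring
      rw [← one_div, le_div_iff₀ hrpos', h2]
      exact h1
    have hsup : γpol (-cos (θ (j:ℤ)), -sin (θ (j:ℤ))) ≤ (-(r (j:ℤ)))⁻¹ := by
      rw [hγpol]
      exact Finset.sup'_le _ _ hbound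
    rw [← hγpol] at hq
    have hfin : dot p (-cos (θ (j:ℤ)), -sin (θ (j:ℤ))) ≤ (-(r (j:ℤ)))⁻¹ :=
      le_trans hq hsup
    have hdp : dot (n (j:ℤ)) p = dot p (-cos (θ (j:ℤ)), -sin (θ (j:ℤ))) * (-(r (j:ℤ))) := by
      simp only [dot, hn]
      ring
    rw [hdp]
    have hrpos' : 0 < -(r (j:ℤ)) := by linarith [hrneg (j:ℤ)]
    calc dot p (-cos (θ (j:ℤ)), -sin (θ (j:ℤ))) * (-(r (j:ℤ)))
        ≤ (-(r (j:ℤ)))⁻¹ * (-(r (j:ℤ))) := by nlinarith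
      _ = 1 := inv_mul_cancel₀ (ne_of_gt hrpos')
  · -- the polygon is contained in the Frank set
    intro p hp q hq
    simp only [Set.mem_setOf_eq] at hp
    obtain ⟨k0, hk0mem, hk0⟩ := Finset.exists_mem_eq_sup'
      (Finset.nonempty_range_iff.mpr (by omega : N ≠ 0)) (fun k => dot (m (k:ℤ)) q)
    set j : ℤ := (k0 : ℤ) with hj
    have hmax : ∀ k ∈ Finset.range N, dot (m (k:ℤ)) q ≤ dot (m j) q := by
      intro k hk
      exact le_of_le_of_eq (Finset.le_sup' (fun k : ℕ => dot (m (k:ℤ)) q) hk) hk0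
    have hnbr := (Set.ext_iff.mp (hγ3a j) q).mp hmax
    simp only [Set.mem_setOf_eq] at hnbr
    obtain ⟨hq1, hq2⟩ := hnbr
    -- translate the two neighbour inequalities into the c-frame
    have hv1 : 0 ≤ cos (c j) * q.1 + sin (c j) * q.2 := by
      have hd : dot (m j) q - dot (m (j-1)) q = a j * q.1 + b j * q.2 := by
        simp only [dot, hm, ha, hb]
        ring
      have hd2 : a j * q.1 + b j * q.2
          = Real.sqrt (a j ^ 2 + b j ^ 2) * (cos (c j) * q.1 + sin (c j) * q.2) := by
        linear_combination q.1 * haR j + q.2 * hbR j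
      by_contra hX
      push_neg at hX
      have := mul_neg_of_pos_of_neg (hRpos j) hX
      linarith
    have hv2 : cos (c (j+1)) * q.1 + sin (c (j+1)) * q.2 ≤ 0 := by
      have hd : dot (m (j+1)) q - dot (m j) q = a (j+1) * q.1 + b (j+1) * q.2 := by
        rw [ha, hb]
        simp only [dot, hm, add_sub_cancel_right]
        ring
      have hd2 : a (j+1) * q.1 + b (j+1) * q.2
          = Real.sqrt (a (j+1) ^ 2 + b (j+1) ^ 2)
            * (cos (c (j+1)) * q.1 + sin (c (j+1)) * q.2) := by
        linear_combination q.1 * haR (j+1) + q.2 * hbR (j+1)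
      by_contra hX
      push_neg at hX
      have := mul_pos (hRpos (j+1)) hX
      linarith
    -- local convexity: the two normals turn positively
    have hsin : 0 < sin (c (j+1) - c j) := by
      have hd3 : dot (m (j+1)) (cos (θ j), sin (θ j)) - dot (m j) (cos (θ j), sin (θ j))
          = a (j+1) * cos (θ j) + b (j+1) * sin (θ j) := by
        rw [ha, hb]
        simp only [dot, hm, add_sub_cancel_right]
        ring
      have hd4 : a (j+1) * cos (θ j) + b (j+1) * sin (θ j)
          = Real.sqrt (a (j+1) ^ 2 + b (j+1) ^ 2) * sin (c (j+1) - c j) := by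
        rw [hcosθ, hsinθ, sin_sub]
        linear_combination (-(Real.sin (c j))) * haR (j+1) + Real.cos (c j) * hbR (j+1)
      have hpos := hs j
      by_contra hX
      push_neg at hX
      have := mul_nonpos_of_nonneg_of_nonpos (hRpos (j+1)).le hX
      linarith
    set D : ℝ := r j * r (j+1) * sin (c (j+1) - c j) with hDdef
    have hDpos : 0 < D := mul_pos (mul_pos_of_neg_of_neg (hrneg j) (hrneg (j+1))) hsin
    have hD0 : D ≠ 0 := ne_of_gt hDpos
    set α : ℝ := r (j+1) * (cos (c (j+1)) * q.1 + sin (c (j+1)) * q.2) / D with hαdef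
    set β : ℝ := (-(r j)) * (cos (c j) * q.1 + sin (c j) * q.2) / D with hβdef
    have hα : 0 ≤ α := by
      rw [hαdef]
      apply div_nonneg _ hDpos.le
      have h := mul_nonneg (neg_nonneg.mpr (hrneg (j+1)).le) (neg_nonneg.mpr hv2)
      nlinarith [h]
    have hβ : 0 ≤ β := by
      rw [hβdef]
      apply div_nonneg _ hDpos.le
      exact mul_nonneg (by linarith [hrneg j]) hv1
    have hdec1 : α * (n j).1 + β * (n (j+1)).1 = q.1 := by
      rw [hαdef, hβdef]
      simp only [hn, hcosθ, hsinθ]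
      field_simp
      rw [hDdef, sin_sub]
      ring
    have hdec2 : α * (n j).2 + β * (n (j+1)).2 = q.2 := by
      rw [hαdef, hβdef]
      simp only [hn, hcosθ, hsinθ]
      field_simp
      rw [hDdef, sin_sub]
      ring
    -- the polygon constraints at j and j+1
    have hpj : dot (n j) p ≤ 1 := by
      rw [hj]
      exact hp k0 hk0mem
    have hpj1 : dot (n (j+1)) p ≤ 1 := by
      by_cases hlt : k0 + 1 < N
      · have h := hp (k0+1) (Finset.mem_range.mpr hlt)
        have e : ((k0+1 : ℕ) : ℤ) = j + 1 := by rw [hj]; push_cast; ring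
        rwa [e] at h
      · have hk0N : k0 = N - 1 := by
          have := Finset.mem_range.mp hk0mem
          omega
        have e : j + 1 = (0:ℤ) + N := by
          rw [hj, hk0N]
          have : 1 ≤ N := by omega
          push_cast [this]
          ring
        rw [e, hnper]
        exact hp 0 (Finset.mem_range.mpr (by omega))
    -- incidence at the two normals
    have hmnj1 : dot (m j) (n (j+1)) = 1 := by
      have h := hmn' (j+1)
      rwa [add_sub_cancel_right] at h
    -- put everything together
    have hcomb : dot p q = α * dot (n j) p + β * dot (n (j+1)) p := by
      simp only [dot]
      rw [← hdec1, ← hdec2]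
      ring
    have hsum : α + β = dot (m j) q := by
      have h0 : dot (m j) q = α * dot (m j) (n j) + β * dot (m j) (n (j+1)) := by
        simp only [dot]
        rw [← hdec1, ← hdec2]
        ring
      rw [h0, hmn j, hmnj1]
      ring
    have hγq : γpol q = dot (m j) q := by
      rw [hγpol]
      exact hk0
    rw [hγq, ← hsum, hcomb]
    have t1 : α * dot (n j) p ≤ α * 1 := mul_le_mul_of_nonneg_left hpj hα
    have t2 : β * dot (n (j+1)) p ≤ β * 1 := mul_le_mul_of_nonneg_left hpj1 hβ
    linarith
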